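/- For any finite group G with elements g_1,...,g_n and any normalized {±1}-valued 2-cocycle ψ on G, the Grammian of the cocyclic matrix M_ψ = [ψ(g_i,g_j)] satisfies (M_ψ M_ψᵀ)_{ij} = ψ(g_i g_j⁻¹, g_j) Σ_{g∈G} ψ(g_i g_j⁻¹, g) and (M_ψᵀ M_ψ)_{ij} = ψ(g_i, g_i⁻¹ g_j) Σ_{g∈G} ψ(g, g_i⁻¹ g_j). -/
import Mathlib


open Matrix

/-- Grammian entries of a cocyclic matrix. For a normalized ±1
cocycle `ψ` on a finite group `G`,
`(M_ψ M_ψᵀ)_{g,h} = ψ(gh⁻¹, h) Σ_x ψ(gh⁻¹, x)` and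
`(M_ψᵀ M_ψ)_{g,h} = ψ(g, g⁻¹h) Σ_x ψ(x, g⁻¹h)`. -/
theorem stmt_19 (G : Type*) [Group G] [Fintype G] [DecidableEq G]
    (ψ : G → G → ℤ) (hval : ∀ g h, ψ g h = 1 ∨ ψ g h = -1)
    (hnorm : ψ 1 1 = 1)
    (hcoc : ∀ g h k, ψ g h * ψ (g * h) k = ψ g (h * k) * ψ h k) :
    ∀ g h : G,
      ((Matrix.of ψ) * (Matrix.of ψ)ᵀ) g h
          = ψ (g * h⁻¹) h * ∑ x : G, ψ (g * h⁻¹) x ∧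
      ((Matrix.of ψ)ᵀ * (Matrix.of ψ)) g h
          = ψ g (g⁻¹ * h) * ∑ x : G, ψ x (g⁻¹ * h) := by
  have sq : ∀ a b : G, ψ a b * ψ a b = 1 := by
    intro a b; rcases hval a b with h | h <;> rw [h] <;> ring
  intro g h
  constructor
  · simp only [Matrix.mul_apply, Matrix.transpose_apply, Matrix.of_apply]
    rw [← Equiv.sum_comp (Equiv.mulLeft h) (fun x => ψ (g * h⁻¹) x), Finset.mul_sum]
    apply Finset.sum_congr rfl
    intro x _
    have e1 := hcoc (g * h⁻¹) h x
    rw [inv_mul_cancel_right] at e1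
    simp only [Equiv.coe_mulLeft]
    linear_combination (ψ (g * h⁻¹) h * ψ h x) * e1
      - (ψ g x * ψ h x) * sq (g * h⁻¹) h + (ψ (g * h⁻¹) h * ψ (g * h⁻¹) (h * x)) * sq h x
  · simp only [Matrix.mul_apply, Matrix.transpose_apply, Matrix.of_apply]
    rw [← Equiv.sum_comp (Equiv.mulRight g) (fun x => ψ x (g⁻¹ * h)), Finset.mul_sum]
    apply Finset.sum_congr rfl
    intro x _
    have e2 := hcoc x g (g⁻¹ * h)
    rw [mul_inv_cancel_left] at e2
    simp only [Equiv.coe_mulRight]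
    linear_combination (-(ψ g (g⁻¹ * h) * ψ x g)) * e2
      - (ψ x g * ψ x h) * sq g (g⁻¹ * h) + (ψ g (g⁻¹ * h) * ψ (x * g) (g⁻¹ * h)) * sq x g
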